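/- Let n ≥ 1, s ∈ ℝ and σ > s. Then there exist θ ∈ (0,1) and C > 0 such that for every f ∈ L²(ℝⁿ) with ∑_{k ∈ ℤⁿ} (1+|k|)^σ ‖𝓕f‖_{L²(Q_k)} < ∞, one has ∑_{k ∈ ℤⁿ} (1+|k|)^s ‖𝓕f‖_{L²(Q_k)} ≤ C ( ∑_{k ∈ ℤⁿ} (1+|k|)^σ ‖𝓕f‖_{L²(Q_k)} )^{1-θ} ‖f‖_{L²(ℝⁿ)}^θ. -/

import Mathlib

open MeasureTheory

noncomputable section

/-- The unit cube `Q_k = {ξ : -1/2 ≤ ξ_j - k_j < 1/2}` around `k ∈ ℤⁿ`. -/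
def Qcube {n : ℕ} (k : Fin n → ℤ) : Set (Fin n → ℝ) :=
  {ξ | ∀ j, (k j : ℝ) - 1 / 2 ≤ ξ j ∧ ξ j < (k j : ℝ) + 1 / 2}

/-- `⟨k⟩ = 1 + |k|` with the Euclidean norm of `k ∈ ℤⁿ`. -/
def jpn {n : ℕ} (k : Fin n → ℤ) : ℝ := 1 + Real.sqrt (∑ j, ((k j : ℝ)) ^ 2)


lemma jpn_aux_one_le {n : ℕ} (k : Fin n → ℤ) : 1 ≤ (1 + Real.sqrt (∑ j, ((k j : ℝ)) ^ 2)) :=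
  le_add_of_nonneg_right (Real.sqrt_nonneg _)

lemma jpn_aux_factor {n : ℕ} (k : Fin n → ℤ) (j : Fin n) :
    1 + |(k j : ℝ)| ≤ 1 + Real.sqrt (∑ i, ((k i : ℝ)) ^ 2) := by
  have h := Finset.single_le_sum (f := fun i : Fin n => ((k i : ℝ)) ^ 2)
    (fun i _ => sq_nonneg _) (Finset.mem_univ j)
  calc 1 + |(k j : ℝ)| = 1 + Real.sqrt (((k j : ℝ)) ^ 2) := by rw [Real.sqrt_sq_eq_abs]
    _ ≤ _ := by gcongr

lemma summable_c : Summable (fun m : ℤ => (((1:ℝ) + |(m : ℝ)|) ^ 2)⁻¹) := by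
  have hnat : Summable (fun m : ℕ => (((1:ℝ) + (m : ℝ)) ^ 2)⁻¹) := by
    have h := (summable_nat_add_iff (f := fun m : ℕ => 1 / (m : ℝ) ^ 2) 1).2
      (Real.summable_one_div_nat_pow.2 one_lt_two)
    refine h.congr fun m => ?_
    push_cast
    rw [one_div]
    ring_nf
  refine Summable.of_nat_of_neg (hnat.congr fun m => ?_) (hnat.congr fun m => ?_) <;>
    simp [abs_of_nonneg, Int.cast_natCast]

lemma summable_pi_prod : ∀ n : ℕ,
    Summable (fun k : Fin n → ℤ => ∏ j, (((1:ℝ) + |(k j : ℝ)|) ^ 2)⁻¹) := by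
  intro n
  induction n with
  | zero => exact Summable.of_finite
  | succ n ih =>
      have hmul := summable_c.mul_of_nonneg ih
        (fun m => by positivity) (fun v => Finset.prod_nonneg fun j _ => by positivity)
      rw [← (Fin.consEquiv (fun _ : Fin (n+1) => ℤ)).summable_iff]
      refine hmul.congr fun p => ?_
      simp [Function.comp, Fin.prod_univ_succ, Fin.consEquiv, mul_comm]


lemma summable_jpn_rpow {n : ℕ} {t : ℝ} (ht : t ≤ -(2 * n)) :
    Summable (fun k : Fin n → ℤ => jpn k ^ t) := by
  refine Summable.of_nonneg_of_le
    (fun k => Real.rpow_nonneg (le_trans zero_le_one (jpn_aux_one_le k)) t)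
    (fun k => ?_) (summable_pi_prod n)
  have h1 : (1:ℝ) ≤ jpn k := jpn_aux_one_le k
  have h0 : (0:ℝ) < jpn k := lt_of_lt_of_le one_pos h1
  calc jpn k ^ t ≤ jpn k ^ (-(2 * (n:ℝ))) := Real.rpow_le_rpow_of_exponent_le h1 ht
    _ = ((jpn k ^ n) ^ 2)⁻¹ := by
        rw [Real.rpow_neg h0.le, ← pow_mul, mul_comm n 2]
        congr 1
        rw [← Real.rpow_natCast (jpn k) (2 * n)]
        push_cast
        ring_nf
    _ ≤ _ := by
        rw [Finset.prod_inv_distrib]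
        have hprod : (∏ j, ((1:ℝ) + |(k j : ℝ)|) ^ 2) ≤ (jpn k ^ n) ^ 2 := by
          rw [← pow_mul, mul_comm n 2, pow_mul]
          calc (∏ j, ((1:ℝ) + |(k j : ℝ)|) ^ 2) ≤ ∏ _j : Fin n, jpn k ^ 2 :=
                Finset.prod_le_prod (fun j _ => by positivity)
                  (fun j _ => by
                    have := jpn_aux_factor k j
                    have h2 : (0:ℝ) ≤ 1 + |(k j : ℝ)| := by positivity
                    exact pow_le_pow_left₀ h2 this 2)
            _ = (jpn k ^ 2) ^ n := by
                rw [Finset.prod_const, Finset.card_univ, Fintype.card_fin]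
        have hpos : (0:ℝ) < ∏ j, ((1:ℝ) + |(k j : ℝ)|) ^ 2 :=
          Finset.prod_pos fun j _ => by positivity
        exact inv_anti₀ hpos hprod

lemma jpn_one_le {n : ℕ} (k : Fin n → ℤ) : 1 ≤ jpn k :=
  le_add_of_nonneg_right (Real.sqrt_nonneg _)

/-- interpolation inequality between weighted `M^s_{2,1}` modulation
norms and the `L²` norm.  Since the Fourier–Plancherel transform `𝓕` is unitary on
`L²(ℝⁿ)`, we state it for `g = 𝓕f`: both sides only involve `𝓕f` (in particular
`‖f‖_{L²} = ‖𝓕f‖_{L²} = ‖g‖_{L²}`). -/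
theorem stmt_18 (n : ℕ) (hn : 1 ≤ n) (s σ : ℝ) (hsσ : s < σ) :
    ∃ θ : ℝ, θ ∈ Set.Ioo (0 : ℝ) 1 ∧
      ∃ C : ℝ, 0 < C ∧
        ∀ g : (Fin n → ℝ) → ℂ,
          MemLp g 2 volume →
          Summable (fun k : Fin n → ℤ =>
            jpn k ^ σ * (∫ ξ in Qcube k, ‖g ξ‖ ^ 2) ^ ((1 : ℝ) / 2)) →
          (∑' k : Fin n → ℤ, jpn k ^ s * (∫ ξ in Qcube k, ‖g ξ‖ ^ 2) ^ ((1 : ℝ) / 2))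
            ≤ C * (∑' k : Fin n → ℤ,
                  jpn k ^ σ * (∫ ξ in Qcube k, ‖g ξ‖ ^ 2) ^ ((1 : ℝ) / 2)) ^ (1 - θ) *
                ((∫ ξ : Fin n → ℝ, ‖g ξ‖ ^ 2) ^ ((1 : ℝ) / 2)) ^ θ := by
  have hσs : 0 < σ - s := sub_pos.2 hsσ
  have hden : 0 < |σ| + 2 * (n:ℝ) + 1 := by positivity
  obtain ⟨θ, hθ0, hθ1, hθt⟩ :
      ∃ θ : ℝ, 0 < θ ∧ θ < 1 ∧ |σ| + 2 * (n:ℝ) + 1 ≤ (σ - s) / θ := by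
    have hθ0 : 0 < min (1/2) ((σ - s) / (|σ| + 2 * (n:ℝ) + 1)) :=
      lt_min (by norm_num) (div_pos hσs hden)
    refine ⟨min (1/2) ((σ - s) / (|σ| + 2 * (n:ℝ) + 1)), hθ0,
      lt_of_le_of_lt (min_le_left _ _) (by norm_num), ?_⟩
    rw [le_div_iff₀ hθ0]
    calc (|σ| + 2 * (n:ℝ) + 1) * min (1/2) ((σ - s) / (|σ| + 2 * (n:ℝ) + 1))
        ≤ (|σ| + 2 * (n:ℝ) + 1) * ((σ - s) / (|σ| + 2 * (n:ℝ) + 1)) := by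
          gcongr
          exact min_le_right _ _
      _ = σ - s := by field_simp
  have h1θ : 0 < 1 - θ := by linarith
  set t : ℝ := σ - (σ - s) / θ with htdef
  have hts : (1 - θ) * σ + θ * t = s := by
    rw [htdef]
    field_simp
    ring
  have ht : t ≤ -(2 * (n:ℝ)) := by
    have hσabs : σ ≤ |σ| := le_abs_self σ
    show σ - (σ - s) / θ ≤ -(2 * (n:ℝ))
    linarith
  -- summable weight
  have hw : Summable (fun k : Fin n → ℤ => jpn k ^ t) := summable_jpn_rpow ht
  have hwnn : ∀ k : Fin n → ℤ, (0:ℝ) ≤ jpn k ^ t :=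
    fun k => Real.rpow_nonneg (le_trans zero_le_one (jpn_one_le k)) t
  set S : ℝ := ∑' k : Fin n → ℤ, jpn k ^ t with hSdef
  have hS1 : 1 ≤ S := by
    have h0 : jpn (0 : Fin n → ℤ) ^ t = 1 := by
      simp [jpn]
    have := Summable.le_tsum hw (0 : Fin n → ℤ) (fun k _ => hwnn k)
    rwa [h0] at this
  have hS0 : (0:ℝ) < S := lt_of_lt_of_le one_pos hS1
  refine ⟨θ, ⟨hθ0, hθ1⟩, S ^ θ, Real.rpow_pos_of_pos hS0 θ, ?_⟩
  intro g hg hsum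
  set a : (Fin n → ℤ) → ℝ := fun k => (∫ ξ in Qcube k, ‖g ξ‖ ^ 2) ^ ((1 : ℝ) / 2) with hadef
  have ha0 : ∀ k, 0 ≤ a k := fun k =>
    Real.rpow_nonneg (integral_nonneg fun ξ => by positivity) _
  set L : ℝ := (∫ ξ : Fin n → ℝ, ‖g ξ‖ ^ 2) ^ ((1 : ℝ) / 2) with hLdef
  have hL0 : 0 ≤ L := Real.rpow_nonneg (integral_nonneg fun ξ => by positivity) _
  have hint : Integrable (fun ξ : Fin n → ℝ => ‖g ξ‖ ^ 2) volume := by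
    have h := hg.integrable_norm_rpow two_ne_zero ENNReal.ofNat_ne_top
    refine h.congr ?_
    refine Filter.Eventually.of_forall fun ξ => ?_
    have h2 : ((2:ENNReal)).toReal = ((2:ℕ):ℝ) := by simp
    simp only [h2, Real.rpow_natCast]
  have haL : ∀ k, a k ≤ L := by
    intro k
    refine Real.rpow_le_rpow (integral_nonneg fun ξ => by positivity) ?_ (by norm_num)
    exact setIntegral_le_integral hint (Filter.Eventually.of_forall fun ξ => by positivity)
  -- Hölder
  have hpq : ((1 - θ)⁻¹).HolderConjugate θ⁻¹ := by
    constructor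
    · rw [inv_inv, inv_inv, inv_one]; ring
    · exact inv_pos.2 h1θ
    · exact inv_pos.2 hθ0
  set F : (Fin n → ℤ) → ℝ := fun k => (jpn k ^ σ * a k) ^ (1 - θ) with hFdef
  set G : (Fin n → ℤ) → ℝ := fun k => (jpn k ^ t * a k) ^ θ with hGdef
  have hjnn : ∀ (k : Fin n → ℤ) (x : ℝ), (0:ℝ) ≤ jpn k ^ x :=
    fun k x => Real.rpow_nonneg (le_trans zero_le_one (jpn_one_le k)) x
  have hFnn : ∀ k, 0 ≤ F k := fun k => Real.rpow_nonneg (mul_nonneg (hjnn k σ) (ha0 k)) _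
  have hGnn : ∀ k, 0 ≤ G k := fun k => Real.rpow_nonneg (mul_nonneg (hjnn k t) (ha0 k)) _
  have hFp : ∀ k, F k ^ ((1 - θ)⁻¹) = jpn k ^ σ * a k := by
    intro k
    simp only [hFdef]
    rw [← Real.rpow_mul (mul_nonneg (hjnn k σ) (ha0 k)), mul_inv_cancel₀ (ne_of_gt h1θ),
      Real.rpow_one]
  have hGq : ∀ k, G k ^ (θ⁻¹) = jpn k ^ t * a k := by
    intro k
    simp only [hGdef]
    rw [← Real.rpow_mul (mul_nonneg (hjnn k t) (ha0 k)), mul_inv_cancel₀ (ne_of_gt hθ0),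
      Real.rpow_one]
  have hjpos : ∀ k : Fin n → ℤ, (0:ℝ) < jpn k := fun k => lt_of_lt_of_le one_pos (jpn_one_le k)
  have hFG : ∀ k, F k * G k = jpn k ^ s * a k := by
    intro k
    simp only [hFdef, hGdef]
    rw [Real.mul_rpow (hjnn k σ) (ha0 k), Real.mul_rpow (hjnn k t) (ha0 k),
      ← Real.rpow_mul (hjpos k).le, ← Real.rpow_mul (hjpos k).le]
    have haa : a k ^ (1 - θ) * a k ^ θ = a k := by
      rw [← Real.rpow_add' (ha0 k) (by norm_num), sub_add_cancel, Real.rpow_one]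
    have hjj : jpn k ^ (σ * (1 - θ)) * jpn k ^ (t * θ) = jpn k ^ s := by
      rw [← Real.rpow_add (hjpos k)]
      congr 1
      linarith [hts]
    calc jpn k ^ (σ * (1 - θ)) * a k ^ (1 - θ) * (jpn k ^ (t * θ) * a k ^ θ)
        = jpn k ^ (σ * (1 - θ)) * jpn k ^ (t * θ) * (a k ^ (1 - θ) * a k ^ θ) := by ring
      _ = jpn k ^ s * a k := by rw [haa, hjj]
  -- summability of G^q
  have hta : Summable (fun k : Fin n → ℤ => jpn k ^ t * a k) := by
    refine Summable.of_nonneg_of_le (fun k => mul_nonneg (hjnn k t) (ha0 k))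
      (fun k => mul_le_mul_of_nonneg_left (haL k) (hjnn k t)) (hw.mul_right L)
  have hFsum : Summable (fun k => F k ^ ((1 - θ)⁻¹)) := by
    refine hsum.congr fun k => (hFp k).symm
  have hGsum : Summable (fun k => G k ^ (θ⁻¹)) := by
    refine hta.congr fun k => (hGq k).symm
  have key := Real.inner_le_Lp_mul_Lq_tsum_of_nonneg hpq hFnn hGnn hFsum hGsum
  rw [tsum_congr hFp, tsum_congr hGq, tsum_congr hFG] at key
  have h1p : 1 / ((1 - θ)⁻¹) = 1 - θ := by rw [one_div, inv_inv]
  have h1q : 1 / (θ⁻¹) = θ := by rw [one_div, inv_inv]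
  rw [h1p, h1q] at key
  -- bound the middle factor
  have htsnn : (0:ℝ) ≤ ∑' k : Fin n → ℤ, jpn k ^ t * a k :=
    tsum_nonneg fun k => mul_nonneg (hjnn k t) (ha0 k)
  have hmid : (∑' k : Fin n → ℤ, jpn k ^ t * a k) ^ θ ≤ S ^ θ * L ^ θ := by
    have hSL : (∑' k : Fin n → ℤ, jpn k ^ t * a k) ≤ S * L := by
      have := Summable.tsum_le_tsum (f := fun k : Fin n → ℤ => jpn k ^ t * a k)
        (g := fun k : Fin n → ℤ => jpn k ^ t * L)
        (fun k => mul_le_mul_of_nonneg_left (haL k) (hjnn k t)) hta (hw.mul_right L)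
      rwa [tsum_mul_right] at this
    calc (∑' k : Fin n → ℤ, jpn k ^ t * a k) ^ θ
        ≤ (S * L) ^ θ := Real.rpow_le_rpow htsnn hSL hθ0.le
      _ = S ^ θ * L ^ θ := Real.mul_rpow hS0.le hL0
  have hAnn : (0:ℝ) ≤ (∑' k : Fin n → ℤ, jpn k ^ σ * a k) ^ (1 - θ) :=
    Real.rpow_nonneg (tsum_nonneg fun k => mul_nonneg (hjnn k σ) (ha0 k)) _
  calc (∑' k : Fin n → ℤ, jpn k ^ s * a k)
      ≤ (∑' k : Fin n → ℤ, jpn k ^ σ * a k) ^ (1 - θ) *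
          (∑' k : Fin n → ℤ, jpn k ^ t * a k) ^ θ := key
    _ ≤ (∑' k : Fin n → ℤ, jpn k ^ σ * a k) ^ (1 - θ) * (S ^ θ * L ^ θ) := by
        exact mul_le_mul_of_nonneg_left hmid hAnn
    _ = S ^ θ * (∑' k : Fin n → ℤ, jpn k ^ σ * a k) ^ (1 - θ) * L ^ θ := by ring
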